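/- arXiv:2307.15013 — 2 statements merged into one kernel-verified Lean document; each statement's English description precedes it below -/
import Mathlib

section
/- Let G be a locally compact, second countable Hausdorff group acting continuously on a locally compact Hausdorff space X, let K ⊆ G be a compact identity neighbourhood and let S be a K-slice. Let L ⊆ G be a connected open subset and x ∈ X. If L·x ⊆ (K·S)°, then there exists s ∈ S such that L·x ⊆ K·s. -/
open scoped Pointwise

/-- `S` is a `K`-slice for the action of `G` on `X`: `S` is compact and the action map
`K × S → X, (g, x) ↦ g • x` is injective. -/
def IsSlice {G X : Type*} [Group G] [TopologicalSpace G] [TopologicalSpace X]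
    [MulAction G X] (K : Set G) (S : Set X) : Prop :=
  IsCompact S ∧ Set.InjOn (fun p : G × X => p.1 • p.2) (K ×ˢ S)

/-- **Concentration in slices.** Let `G` be a locally compact, second countable Hausdorff
group acting continuously on a locally compact Hausdorff space `X`, let `K` be a compact
identity neighbourhood, `S` a `K`-slice, `L ⊆ G` a connected open subset and `x ∈ X`.
If `L·x ⊆ (K·S)°` then there is `s ∈ S` with `L·x ⊆ K·s`. -/
theorem stmt_18 {G : Type*} [Group G] [TopologicalSpace G] [IsTopologicalGroup G]
    [LocallyCompactSpace G] [T2Space G] [SecondCountableTopology G]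
    {X : Type*} [TopologicalSpace X] [LocallyCompactSpace X] [T2Space X]
    [MulAction G X] [ContinuousSMul G X]
    (K : Set G) (hKc : IsCompact K) (hKn : K ∈ nhds (1 : G))
    (S : Set X) (hS : IsSlice K S)
    (L : Set G) (hLconn : IsConnected L) (hLopen : IsOpen L)
    (x : X) (hLx : ∀ g ∈ L, g • x ∈ interior (K • S)) :
    ∃ s ∈ S, ∀ g ∈ L, ∃ k ∈ K, g • x = k • s := by
  obtain ⟨hScpt, hinj⟩ := hS
  have hprod : IsCompact (K ×ˢ S) := hKc.prod hScpt
  haveI : CompactSpace ↥(K ×ˢ S) := isCompact_iff_compactSpace.mp hprod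
  set φ : ↥(K ×ˢ S) → X := fun p => p.1.1 • p.1.2 with hφ
  have hφc : Continuous φ := continuous_subtype_val.fst.smul continuous_subtype_val.snd
  have hφi : Function.Injective φ := fun a b h => Subtype.ext (hinj a.2 b.2 h)
  have hce := hφc.isClosedEmbedding hφi
  -- for each g ∈ L, pick the (unique) pair (k, s) with g • x = k • s
  have hmem : ∀ g : ↥L, ∃ p : ↥(K ×ˢ S), φ p = (g : G) • x := by
    rintro ⟨g, hg⟩
    have h1 : g • x ∈ K • S := interior_subset (hLx g hg)
    rw [Set.mem_smul] at h1
    obtain ⟨k, hk, s, hs, hks⟩ := h1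
    exact ⟨⟨(k, s), Set.mk_mem_prod hk hs⟩, hks⟩
  choose p hp using hmem
  have hpc : Continuous p := by
    rw [hce.isInducing.continuous_iff]
    have : φ ∘ p = fun g : ↥L => (g : G) • x := funext hp
    rw [this]
    exact continuous_subtype_val.smul continuous_const
  set κ : ↥L → G := fun g => (p g).1.1 with hκ
  set σ : ↥L → X := fun g => (p g).1.2 with hσ
  have hκc : Continuous κ := (continuous_fst.comp continuous_subtype_val).comp hpc
  have hσc : Continuous σ := (continuous_snd.comp continuous_subtype_val).comp hpc
  have hκK : ∀ g, κ g ∈ K := fun g => ((p g).2).1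
  have hσS : ∀ g, σ g ∈ S := fun g => ((p g).2).2
  have hkey : ∀ g : ↥L, κ g • σ g = (g : G) • x := hp
  have h1K : (1 : G) ∈ K := mem_of_mem_nhds hKn
  obtain ⟨g₀, hg₀⟩ := hLconn.nonempty
  haveI : ConnectedSpace ↥L := Subtype.connectedSpace hLconn
  set A : Set ↥L := {g | σ g = σ ⟨g₀, hg₀⟩} with hA
  have hAclosed : IsClosed A := isClosed_eq hσc continuous_const
  have hAopen : IsOpen A := by
    rw [isOpen_iff_mem_nhds]
    intro g hg
    set u : ↥L → G := fun g' => (κ g')⁻¹ * (g' : G) * (g : G)⁻¹ * κ g with hu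
    have huc : Continuous u :=
      (((hκc.inv.mul continuous_subtype_val).mul continuous_const).mul continuous_const)
    have hu1 : u g = 1 := by
      simp [hu, mul_assoc]
    have hKnhd : u ⁻¹' K ∈ nhds g := by
      apply huc.continuousAt.preimage_mem_nhds
      rw [hu1]; exact hKn
    filter_upwards [hKnhd] with g' hg'
    -- show σ g' = σ g
    have hσeq : u g' • σ g = σ g' := by
      have h1 : σ g = ((κ g)⁻¹ * (g : G)) • x := by
        rw [mul_smul, ← hkey g, ← mul_smul, inv_mul_cancel, one_smul]
      have h2 : σ g' = ((κ g')⁻¹ * (g' : G)) • x := by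
        rw [mul_smul, ← hkey g', ← mul_smul, inv_mul_cancel, one_smul]
      rw [h1, h2, ← mul_smul, hu]
      congr 1
      group
    have := hinj (Set.mk_mem_prod hg' (hσS g)) (Set.mk_mem_prod h1K (hσS g'))
      (by simpa using hσeq)
    have hσgg' : σ g' = σ g := by
      have := (Prod.ext_iff.mp this).2
      simpa using this.symm
    show σ g' = σ ⟨g₀, hg₀⟩
    rw [hσgg', hg]
  have hAuniv : A = Set.univ :=
    IsClopen.eq_univ ⟨hAclosed, hAopen⟩ ⟨⟨g₀, hg₀⟩, rfl⟩
  refine ⟨σ ⟨g₀, hg₀⟩, hσS _, fun g hg => ?_⟩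
  have hgA : (⟨g, hg⟩ : ↥L) ∈ A := hAuniv ▸ Set.mem_univ _
  refine ⟨κ ⟨g, hg⟩, hκK _, ?_⟩
  rw [← hgA, hkey]
end

section
/- Let G be a locally compact, second countable Hausdorff group and let Λ ⊆ G be an FLC Delone set. Then the discrete hull Ω₀(Λ) = {P ∈ Ω(Λ) : e ∈ P} is totally disconnected (in the Chabauty–Fell topology). -/
open scoped Pointwise

/-- The Chabauty space of a topological group `G`: the set of all closed subsets of `G`. -/
def ChabautySpace (G : Type*) [TopologicalSpace G] := {A : Set G // IsClosed A}

/-- The Chabauty–Fell topology, generated by the subbasis consisting of the sets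
`𝒪_K = {A : A ∩ K = ∅}` for `K` compact and `𝒪^U = {A : A ∩ U ≠ ∅}` for `U` open. -/
instance (G : Type*) [TopologicalSpace G] : TopologicalSpace (ChabautySpace G) :=
  TopologicalSpace.generateFrom
    ({s | ∃ K : Set G, IsCompact K ∧ s = {A : ChabautySpace G | A.1 ∩ K = ∅}} ∪
      {s | ∃ U : Set G, IsOpen U ∧ s = {A : ChabautySpace G | (A.1 ∩ U).Nonempty}})

/-- The hull of a closed subset `Λ ⊆ G`: the closure in the Chabauty space of the set of
left translates of `Λ`. -/
def hull {G : Type*} [Group G] [TopologicalSpace G] (Λ : Set G) :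
    Set (ChabautySpace G) :=
  closure {C : ChabautySpace G | ∃ g : G, C.1 = g • Λ}

/-- **The discrete hull of an FLC Delone set is totally disconnected.**
Let `G` be a locally compact, second countable Hausdorff group and `Λ ⊆ G` a closed subset
which is an FLC Delone set, i.e. (a) for every compact `K ⊆ G` the family
`{P ∩ K : P ∈ Ω₀(Λ)}` is finite, and (b) `∅ ∉ Ω(Λ)`.  Then the discrete hull
`Ω₀(Λ) = {P ∈ Ω(Λ) : e ∈ P}` is totally disconnected in the Chabauty–Fell topology. -/
theorem stmt_19 {G : Type*} [Group G] [TopologicalSpace G] [IsTopologicalGroup G]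
    [LocallyCompactSpace G] [T2Space G] [SecondCountableTopology G]
    (Λ : Set G) (hΛ : IsClosed Λ)
    (hFLC : ∀ K : Set G, IsCompact K →
      {s : Set G | ∃ P ∈ {P ∈ hull Λ | (1 : G) ∈ P.1}, s = P.1 ∩ K}.Finite)
    (hDelone : (⟨∅, isClosed_empty⟩ : ChabautySpace G) ∉ hull Λ) :
    IsTotallyDisconnected {P ∈ hull Λ | (1 : G) ∈ P.1} := by
  intro t hts hpc x hx y hy
  by_contra hxy
  have hne : x.1 ≠ y.1 := fun h => hxy (Subtype.ext h)
  have key : ∀ a ∈ t, ∀ b ∈ t, ∀ g : G, g ∈ a.1 → g ∉ b.1 → False := by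
    intro a ha b hb g hga hgb
    -- a compact neighborhood of g missing b
    obtain ⟨C, hCcomp, hgC, hCU⟩ :=
      exists_compact_subset b.2.isOpen_compl hgb
    -- a compact set containing C in its interior
    obtain ⟨L, hLcomp, hCL, -⟩ :=
      exists_compact_between hCcomp isOpen_univ (Set.subset_univ C)
    -- the (finitely many) patterns on L
    have hS := hFLC L hLcomp
    set S : Set (Set G) :=
      {s : Set G | ∃ P ∈ {P ∈ hull Λ | (1 : G) ∈ P.1}, s = P.1 ∩ L} with hSdef
    -- the union of patterns disjoint from C is closed
    set Bad : Set G := ⋃₀ {s ∈ S | s ∩ C = ∅} with hBadDef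
    have hBadClosed : IsClosed Bad := by
      rw [hBadDef, Set.sUnion_eq_biUnion]
      apply Set.Finite.isClosed_biUnion (hS.subset (Set.sep_subset _ _))
      rintro s ⟨⟨P, hP, rfl⟩, -⟩
      exact (hLcomp.inter_left P.2).isClosed
    set V : Set G := interior L \ Bad with hVdef
    have hVopen : IsOpen V := isOpen_interior.sdiff hBadClosed
    set A : Set (ChabautySpace G) := {Q | (Q.1 ∩ V).Nonempty} with hAdef
    set B : Set (ChabautySpace G) := {Q | Q.1 ∩ C = ∅} with hBdef
    have hAopen : IsOpen A :=
      TopologicalSpace.GenerateOpen.basic _ (Or.inr ⟨V, hVopen, rfl⟩)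
    have hBopen : IsOpen B :=
      TopologicalSpace.GenerateOpen.basic _ (Or.inl ⟨C, hCcomp, rfl⟩)
    -- if Q meets C then Q meets V
    have memA : ∀ Q : ChabautySpace G, (Q.1 ∩ C).Nonempty → Q ∈ A := by
      rintro Q ⟨q, hqQ, hqC⟩
      refine ⟨q, hqQ, hCL hqC, ?_⟩
      rintro ⟨s, ⟨-, hsC⟩, hqs⟩
      exact absurd (Set.eq_empty_iff_forall_notMem.mp hsC q ⟨hqs, hqC⟩) (fun h => h)
    -- if Q ∈ hull meets V then Q meets C
    have memA' : ∀ Q : ChabautySpace G, Q ∈ {P ∈ hull Λ | (1 : G) ∈ P.1} →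
        Q ∈ A → (Q.1 ∩ C).Nonempty := by
      rintro Q hQ ⟨q, hqQ, hqIntL, hqBad⟩
      have hqL : q ∈ L := interior_subset hqIntL
      have hpat : Q.1 ∩ L ∈ S := ⟨Q, hQ, rfl⟩
      rcases (Q.1 ∩ L ∩ C).eq_empty_or_nonempty with hemp | ⟨r, ⟨hrQ, -⟩, hrC⟩
      · exact absurd ⟨Q.1 ∩ L, ⟨hpat, hemp⟩, hqQ, hqL⟩ hqBad
      · exact ⟨r, hrQ, hrC⟩
    -- apply preconnectedness
    have hcover : t ⊆ A ∪ B := by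
      intro Q hQ
      rcases (Q.1 ∩ C).eq_empty_or_nonempty with h | h
      · exact Or.inr h
      · exact Or.inl (memA Q h)
    have hxa : (t ∩ A).Nonempty :=
      ⟨a, ha, memA a ⟨g, hga, interior_subset hgC⟩⟩
    have hyb : (t ∩ B).Nonempty := by
      refine ⟨b, hb, Set.eq_empty_iff_forall_notMem.mpr ?_⟩
      rintro z ⟨hzb, hzC⟩
      exact hCU hzC hzb
    obtain ⟨Q, hQt, hQA, hQB⟩ := hpc A B hAopen hBopen hcover hxa hyb
    obtain ⟨r, hr⟩ := memA' Q (hts hQt) hQA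
    exact Set.eq_empty_iff_forall_notMem.mp hQB r hr
  rcases not_and_or.mp
      (mt (fun h : x.1 ⊆ y.1 ∧ y.1 ⊆ x.1 => h.1.antisymm h.2) hne) with h | h
  · obtain ⟨g, hg1, hg2⟩ := Set.not_subset.mp h
    exact key x hx y hy g hg1 hg2
  · obtain ⟨g, hg1, hg2⟩ := Set.not_subset.mp h
    exact key y hy x hx g hg1 hg2
end
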